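/- Suppose a share s is self-maximizing for a class C of valuations that is closed under positive scaling. Then the share guarantee of s is scale invariant: for every v ∈ C and c > 0, the share guarantee of c·v equals c times the share guarantee of v. -/
import Mathlib

open Pointwise

lemma scale_sInf_image {M : Type*} (v : (Finset M) → ℝ) (c : ℝ) (hc : 0 < c)
    (A : Set (Finset M)) :
    sInf ((fun S => c * v S) '' A) = c * sInf (v '' A) := by
  have h : (fun S => c * v S) '' A = c • (v '' A) := by
    ext x
    simp [Set.mem_smul_set, Set.mem_image]
  rw [h, Real.sInf_smul_of_nonneg hc.le, smul_eq_mul]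

/-- If a share `s` is self-maximizing for a class `C` of valuations closed under
positive scaling, then its share guarantee is scale invariant:
the share guarantee of `c • v` equals `c` times the share guarantee of `v`. -/
theorem selfmax_implies_scale_invariant {M : Type*} [Fintype M] [DecidableEq M]
    (C : Set ((Finset M) → ℝ)) (s : ((Finset M) → ℝ) → ℝ)
    (hnonneg : ∀ v ∈ C, ∀ S : Finset M, 0 ≤ v S)
    (hreal : ∀ v ∈ C, ∃ S : Finset M, s v ≤ v S)
    (hclosed : ∀ v ∈ C, ∀ c : ℝ, 0 < c → (fun S => c * v S) ∈ C)
    (hSM : ∀ v ∈ C, ∀ v' ∈ C,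
      sInf (v '' {S : Finset M | s v' ≤ v' S}) ≤ sInf (v '' {S : Finset M | s v ≤ v S}))
    (v : (Finset M) → ℝ) (hv : v ∈ C) (c : ℝ) (hc : 0 < c) :
    sInf ((fun S => c * v S) '' {S : Finset M | s (fun S => c * v S) ≤ c * v S})
      = c * sInf (v '' {S : Finset M | s v ≤ v S}) := by
  set w := fun S => c * v S with hw
  have hwC : w ∈ C := hclosed v hv c hc
  apply le_antisymm
  · -- ĝ(w) = c * sInf (v '' {s w ≤ w S}) ≤ c * ĝ(v) by hSM v w
    have h1 : sInf (v '' {S : Finset M | s w ≤ w S}) ≤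
        sInf (v '' {S : Finset M | s v ≤ v S}) := hSM v hv w hwC
    calc sInf (w '' {S : Finset M | s w ≤ w S})
        = c * sInf (v '' {S : Finset M | s w ≤ w S}) := scale_sInf_image v c hc _
      _ ≤ c * sInf (v '' {S : Finset M | s v ≤ v S}) := by
          exact mul_le_mul_of_nonneg_left h1 hc.le
  · have h2 : sInf (w '' {S : Finset M | s v ≤ v S}) ≤
        sInf (w '' {S : Finset M | s w ≤ w S}) := hSM w hwC v hv
    calc c * sInf (v '' {S : Finset M | s v ≤ v S})
        = sInf (w '' {S : Finset M | s v ≤ v S}) := (scale_sInf_image v c hc _).symm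
      _ ≤ sInf (w '' {S : Finset M | s w ≤ w S}) := h2
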